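/- Let γ ∈ (0,1), η > 0, λ > 0 with γ·λ < 1, and let f : ℕ → ℝ satisfy 0 ≤ f(l) ≤ λ^l for every l ≥ 1. Set H = η · ∑_{l=1}^∞ γ^l · f(l). Fix natural numbers a ≥ 1 and b, and define g(h) = a·h + b. Then there exist constants C > 0 and r ∈ (0,1) — explicitly C = η · (γλ)^{b+1} / (1 − γλ) and r = (γλ)^a — such that for every h ∈ ℕ, |H − η · ∑_{l=1}^{g(h)} γ^l · f(l)| ≤ C · r^h. In particular, the approximation error of the heuristic computed from the terms of length at most g(h) = a·h + b decreases at least exponentially with h. -/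
import Mathlib


/-- the approximation error of the γ-decaying heuristic from terms of
length at most g(h) = a·h + b decreases at least exponentially with h, with explicit
constants C = η·(γλ)^(b+1)/(1-γλ) and r = (γλ)^a. -/
theorem gamma_decaying_exponential_error
    (γ lam η : ℝ) (hγ0 : 0 < γ) (hγ1 : γ < 1) (hη : 0 < η) (hlam : 0 < lam)
    (hγlam : γ * lam < 1)
    (f : ℕ → ℝ) (hf0 : ∀ l : ℕ, 1 ≤ l → 0 ≤ f l) (hf1 : ∀ l : ℕ, 1 ≤ l → f l ≤ lam ^ l)
    (a b : ℕ) (ha : 1 ≤ a) :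
    ∃ C r : ℝ, C = η * (γ * lam) ^ (b + 1) / (1 - γ * lam) ∧ r = (γ * lam) ^ a ∧
      0 < C ∧ 0 < r ∧ r < 1 ∧
      ∀ h : ℕ,
        |η * (∑' l : ℕ, γ ^ (l + 1) * f (l + 1)) -
            η * (∑ l ∈ Finset.range (a * h + b), γ ^ (l + 1) * f (l + 1))| ≤
          C * r ^ h := by
  set q := γ * lam with hqdef
  have hq0 : 0 < q := mul_pos hγ0 hlam
  have hq1 : q < 1 := hγlam
  have h1q : 0 < 1 - q := by linarith
  refine ⟨_, _, rfl, rfl, ?_, pow_pos hq0 a, ?_, ?_⟩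
  · positivity
  · exact pow_lt_one₀ hq0.le hq1 (by omega)
  · intro h
    set n := a * h + b with hn
    set u : ℕ → ℝ := fun l => γ ^ (l + 1) * f (l + 1) with hu
    have hu0 : ∀ l, 0 ≤ u l := fun l =>
      mul_nonneg (pow_nonneg hγ0.le _) (hf0 (l + 1) (by omega))
    have hule : ∀ l, u l ≤ q ^ (l + 1) := by
      intro l
      calc u l ≤ γ ^ (l + 1) * lam ^ (l + 1) :=
            mul_le_mul_of_nonneg_left (hf1 (l + 1) (by omega)) (pow_nonneg hγ0.le _)
        _ = q ^ (l + 1) := by rw [hqdef, mul_pow]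
    have hsumq : Summable (fun l : ℕ => q ^ (l + 1)) := by
      simpa [pow_succ, mul_comm] using
        (summable_geometric_of_lt_one hq0.le hq1).mul_left q
    have hsum : Summable u := Summable.of_nonneg_of_le hu0 hule hsumq
    have key := Summable.sum_add_tsum_nat_add n hsum
    have htail_nonneg : 0 ≤ ∑' k, u (k + n) := tsum_nonneg fun k => hu0 _
    have hdiff : (∑' l, u l) - ∑ l ∈ Finset.range n, u l = ∑' k, u (k + n) := by
      linarith [key]
    have hv : (fun k : ℕ => q ^ (k + n + 1)) = fun k : ℕ => q ^ (n + 1) * q ^ k := by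
      funext k; rw [← pow_add]; ring_nf
    have hsumq' : Summable (fun k : ℕ => q ^ (k + n + 1)) := by
      rw [hv]; exact (summable_geometric_of_lt_one hq0.le hq1).mul_left _
    have htail_le : (∑' k, u (k + n)) ≤ q ^ (n + 1) / (1 - q) := by
      have h1 : (∑' k, u (k + n)) ≤ ∑' k, q ^ (k + n + 1) :=
        Summable.tsum_le_tsum (fun k => hule _) (Summable.of_nonneg_of_le (fun k => hu0 _) (fun k => hule _) hsumq') hsumq'
      have h2 : (∑' k : ℕ, q ^ (k + n + 1)) = q ^ (n + 1) / (1 - q) := by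
        rw [hv, tsum_mul_left, tsum_geometric_of_lt_one hq0.le hq1]
        field_simp
      linarith
    have habs : |η * (∑' l, u l) - η * ∑ l ∈ Finset.range n, u l|
        = η * ∑' k, u (k + n) := by
      rw [← mul_sub, hdiff, abs_of_nonneg (mul_nonneg hη.le htail_nonneg)]
    rw [habs]
    have hC : η * (q ^ (b + 1) / (1 - q)) * (q ^ a) ^ h
        = η * (q ^ (n + 1) / (1 - q)) := by
      rw [← pow_mul, hn, show a * h + b + 1 = b + 1 + a * h by ring, pow_add]
      ring
    calc η * ∑' k, u (k + n) ≤ η * (q ^ (n + 1) / (1 - q)) :=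
          mul_le_mul_of_nonneg_left htail_le hη.le
      _ = η * q ^ (b + 1) / (1 - q) * (q ^ a) ^ h := by rw [← hC]; ring
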